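/- Let ℓ = n(n−1)/2 and let c_1, …, c_ℓ ∈ {0, …, n−2} be indices such that the product s_{c_1} s_{c_2} ⋯ s_{c_ℓ} of the corresponding adjacent transpositions equals the longest element w_0 of the symmetric group on {0, …, n−1} (the order-reversing permutation); since the length of w_0 is n(n−1)/2, such an expression is automatically reduced. Set ∂_{w_0} := ∂_{c_1} ∘ ∂_{c_2} ∘ ⋯ ∘ ∂_{c_ℓ}. If f ∈ R[x_0, …, x_{n−1}] is symmetric in x_i and x_{i+1} for some 0 ≤ i ≤ n−2, then ∂_{w_0}( f · ∂_{w_0}(g) ) = 0 for every polynomial g. -/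

import Mathlib

/-!
Statement 11: Let `∂_0, …, ∂_{n-2}` be the Demazure operators on `R[x_0, …, x_{n-1}]`
(here `n = N + 2`, indices `c : Fin (N+1)`, `x_c = X c.castSucc`, `x_{c+1} = X c.succ`),
each characterized by `(x_c − x_{c+1}) * ∂_c g = g − s_c g`.  Let `c_1, …, c_ℓ`
(`ℓ = n(n−1)/2`) be a word whose product of adjacent transpositions is the longest element
`w_0` (the order-reversing permutation), and set `∂_{w_0} = ∂_{c_1} ∘ ⋯ ∘ ∂_{c_ℓ}`.
If `f` is symmetric in `x_i` and `x_{i+1}` for some `i`, then `∂_{w_0} (f * ∂_{w_0} g) = 0`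
for every `g`.
-/


open MvPolynomial

namespace DemAux

variable {R : Type*} [CommRing R] {n : ℕ}

lemma X_regular (s : Fin n) (u : MvPolynomial (Fin n) R) (h : X s * u = 0) : u = 0 := by
  ext m
  have h2 := congrArg (coeff (Finsupp.single s 1 + m)) h
  rw [coeff_X_mul] at h2
  simpa using h2

noncomputable def shiftHom (a b : Fin n) : MvPolynomial (Fin n) R →ₐ[R] MvPolynomial (Fin n) R :=
  aeval (fun j => if j = b then X b + X a else X j)

noncomputable def unshiftHom (a b : Fin n) : MvPolynomial (Fin n) R →ₐ[R] MvPolynomial (Fin n) R :=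
  aeval (fun j => if j = b then X b - X a else X j)

lemma shift_inj (a b : Fin n) (hab : a ≠ b) :
    Function.Injective (shiftHom (R := R) a b) := by
  have hcomp : (unshiftHom (R := R) a b).comp (shiftHom a b) = AlgHom.id R _ := by
    apply algHom_ext
    intro j
    by_cases hj : j = b
    · subst hj
      simp [shiftHom, unshiftHom, aeval_X, if_neg hab]
    · simp [shiftHom, unshiftHom, aeval_X, if_neg hj]
  intro u v huv
  have h1 : ∀ p, unshiftHom (R := R) a b (shiftHom a b p) = p := by
    intro p
    have := congrArg (fun f : MvPolynomial (Fin n) R →ₐ[R] MvPolynomial (Fin n) R => f p) hcomp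
    simpa using this
  have := congrArg (unshiftHom (R := R) a b) huv
  rw [h1, h1] at this
  exact this

lemma X_sub_X_regular (a b : Fin n) (hab : a ≠ b) (u : MvPolynomial (Fin n) R)
    (h : (X a - X b) * u = 0) : u = 0 := by
  apply shift_inj a b hab
  have h2 := congrArg (shiftHom (R := R) a b) h
  rw [map_mul, map_sub] at h2
  have hXa : shiftHom (R := R) a b (X a) = X a := by simp [shiftHom, aeval_X, if_neg hab]
  have hXb : shiftHom (R := R) a b (X b) = X b + X a := by simp [shiftHom, aeval_X]
  rw [hXa, hXb] at h2
  have h3 : (X b : MvPolynomial (Fin n) R) * shiftHom (R := R) a b u = 0 := by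
    have : (X a - (X b + X a)) = (-(X b) : MvPolynomial (Fin n) R) := by ring
    rw [this] at h2
    simpa [neg_mul] using h2
  rw [map_zero]
  exact X_regular b _ h3

lemma X_sub_X_cancel (a b : Fin n) (hab : a ≠ b) {u v : MvPolynomial (Fin n) R}
    (h : (X a - X b) * u = (X a - X b) * v) : u = v := by
  have : (X a - X b) * (u - v) = 0 := by rw [mul_sub, h, sub_self]
  have := X_sub_X_regular a b hab _ this
  exact sub_eq_zero.mp this


/-- adjacent swap -/
abbrev sw {N : ℕ} (c : Fin (N + 1)) : Equiv.Perm (Fin (N + 2)) :=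
  Equiv.swap c.castSucc c.succ

lemma ren_ren {m : ℕ} (σ τ : Equiv.Perm (Fin m)) (p : MvPolynomial (Fin m) R) :
    rename ⇑σ (rename ⇑τ p) = rename ⇑(σ * τ) p := by
  rw [rename_rename]; rfl

lemma ren_invol {m : ℕ} (σ : Equiv.Perm (Fin m)) (hσ : σ * σ = 1)
    (p : MvPolynomial (Fin m) R) : rename ⇑σ (rename ⇑σ p) = p := by
  rw [ren_ren, hσ]
  simp

lemma sw_invol {N : ℕ} (c : Fin (N + 1)) : sw c * sw c = 1 := Equiv.swap_mul_self _ _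

section Dem

variable {N : ℕ}

/-- A c = X c - X (c+1) -/
noncomputable def A (c : Fin (N + 1)) : MvPolynomial (Fin (N + 2)) R :=
  X c.castSucc - X c.succ

lemma cs_ne (c : Fin (N + 1)) : c.castSucc ≠ c.succ := (Fin.castSucc_lt_succ (i := c)).ne

lemma ren_A_self (c : Fin (N + 1)) :
    rename (R := R) ⇑(sw c) (A c) = -A (R := R) c := by
  simp only [A, map_sub, rename_X, Equiv.swap_apply_left, Equiv.swap_apply_right]
  ring

lemma A_cancel (c : Fin (N + 1)) {u v : MvPolynomial (Fin (N + 2)) R}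
    (h : A c * u = A c * v) : u = v :=
  X_sub_X_cancel c.castSucc c.succ (cs_ne c) h

variable
  (D : Fin (N + 1) → MvPolynomial (Fin (N + 2)) R →ₗ[R] MvPolynomial (Fin (N + 2)) R)
  (hD : ∀ (c : Fin (N + 1)) (g : MvPolynomial (Fin (N + 2)) R),
      (X c.castSucc - X c.succ) * D c g
        = g - rename (Equiv.swap c.castSucc c.succ) g)

include hD

lemma hD' (c : Fin (N + 1)) (g : MvPolynomial (Fin (N + 2)) R) :
    A c * D c g = g - rename ⇑(sw c) g := hD c g

lemma D_out_inv (c : Fin (N + 1)) (g : MvPolynomial (Fin (N + 2)) R) :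
    rename ⇑(sw c) (D c g) = D c g := by
  have h := hD' D hD c g
  have h2 := congrArg (rename (R := R) ⇑(sw c)) h
  rw [map_mul, map_sub, ren_A_self, ren_invol _ (sw_invol c)] at h2
  apply A_cancel c
  rw [h]
  linear_combination -h2

lemma D_kill (c : Fin (N + 1)) (p : MvPolynomial (Fin (N + 2)) R)
    (hp : rename ⇑(sw c) p = p) : D c p = 0 := by
  have h := hD' D hD c p
  rw [hp, sub_self] at h
  exact X_sub_X_regular c.castSucc c.succ (cs_ne c) _ h

lemma D_comm (c d : Fin (N + 1))
    (h1 : c.castSucc ≠ d.castSucc) (h2 : c.castSucc ≠ d.succ)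
    (h3 : c.succ ≠ d.castSucc) (h4 : c.succ ≠ d.succ)
    (g : MvPolynomial (Fin (N + 2)) R) :
    D c (D d g) = D d (D c g) := by
  have swcomm : sw c * sw d = sw d * sw c := by
    apply Equiv.ext
    intro t
    simp only [Equiv.Perm.mul_apply]
    rcases eq_or_ne t c.castSucc with rfl | htc1
    · rw [Equiv.swap_apply_of_ne_of_ne h1 h2, Equiv.swap_apply_left,
        Equiv.swap_apply_of_ne_of_ne h3 h4]
    rcases eq_or_ne t c.succ with rfl | htc2
    · rw [Equiv.swap_apply_of_ne_of_ne h3 h4, Equiv.swap_apply_right,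
        Equiv.swap_apply_of_ne_of_ne h1 h2]
    rcases eq_or_ne t d.castSucc with rfl | htd1
    · rw [Equiv.swap_apply_left, Equiv.swap_apply_of_ne_of_ne htc1 htc2,
        Equiv.swap_apply_of_ne_of_ne (Ne.symm h2) (Ne.symm h4), Equiv.swap_apply_left]
    rcases eq_or_ne t d.succ with rfl | htd2
    · rw [Equiv.swap_apply_right, Equiv.swap_apply_of_ne_of_ne htc1 htc2,
        Equiv.swap_apply_of_ne_of_ne (Ne.symm h1) (Ne.symm h3), Equiv.swap_apply_right]
    · rw [Equiv.swap_apply_of_ne_of_ne htd1 htd2, Equiv.swap_apply_of_ne_of_ne htc1 htc2]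
      exact (Equiv.swap_apply_of_ne_of_ne htd1 htd2).symm
  have renAd : rename (R := R) ⇑(sw c) (A d) = A d := by
    simp only [A, map_sub, rename_X]
    rw [Equiv.swap_apply_of_ne_of_ne (Ne.symm h1) (Ne.symm h3),
      Equiv.swap_apply_of_ne_of_ne (Ne.symm h2) (Ne.symm h4)]
  have renAc : rename (R := R) ⇑(sw d) (A c) = A c := by
    simp only [A, map_sub, rename_X]
    rw [Equiv.swap_apply_of_ne_of_ne h1 h2, Equiv.swap_apply_of_ne_of_ne h3 h4]
  have calc1 : ∀ (u v : Fin (N + 1)), rename (R := R) ⇑(sw u) (A v) = A v →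
      A v * (A u * (D u (D v g))) =
        g - rename ⇑(sw v) g - rename ⇑(sw u) g + rename ⇑(sw u) (rename ⇑(sw v) g) := by
    intro u v hren
    have e1 : A u * D u (D v g) = D v g - rename ⇑(sw u) (D v g) := hD' D hD u (D v g)
    have e2 : A v * D v g = g - rename ⇑(sw v) g := hD' D hD v g
    have e2s := congrArg (rename (R := R) ⇑(sw u)) e2
    rw [map_mul, map_sub, hren] at e2s
    linear_combination (A v) * e1 + e2 - e2s
  have hc := calc1 c d renAd
  have hd := calc1 d c renAc
  have hren2 : rename (R := R) ⇑(sw c) (rename ⇑(sw d) g)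
      = rename ⇑(sw d) (rename ⇑(sw c) g) := by
    rw [ren_ren, ren_ren, swcomm]
  apply A_cancel c
  apply A_cancel d
  linear_combination hc - hd + hren2

lemma braid_core (c d : Fin (N + 1))
    (hsb : rename (R := R) ⇑(sw c) (A d) = A (R := R) c + A d)
    (hsg : rename (R := R) ⇑(sw c) (A (R := R) c + A d) = A (R := R) d)
    (hta : rename (R := R) ⇑(sw d) (A c) = A (R := R) c + A d)
    (g : MvPolynomial (Fin (N + 2)) R) :
    A c * ((A c + A d) * (A d * (A c * D c (D d (D c g))))) =
      A c * (g - rename ⇑(sw c) g - rename ⇑(sw d) g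
        + rename ⇑(sw d) (rename ⇑(sw c) g) + rename ⇑(sw c) (rename ⇑(sw d) g)
        - rename ⇑(sw c) (rename ⇑(sw d) (rename ⇑(sw c) g))) := by
  set u1 := D c g with hu1
  set u2 := D d u1 with hu2
  set u3 := D c u2 with hu3
  have e1 : A c * u1 = g - rename ⇑(sw c) g := hD' D hD c g
  have e2 : A d * u2 = u1 - rename ⇑(sw d) u1 := hD' D hD d u1
  have e3 : A c * u3 = u2 - rename ⇑(sw c) u2 := hD' D hD c u2
  have e1s := congrArg (rename (R := R) ⇑(sw c)) e1
  rw [map_mul, map_sub, ren_A_self, ren_invol _ (sw_invol c)] at e1s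
  have e1t := congrArg (rename (R := R) ⇑(sw d)) e1
  rw [map_mul, map_sub, hta] at e1t
  have e1ts := congrArg (rename (R := R) ⇑(sw c)) e1t
  rw [map_mul, map_sub, hsg] at e1ts
  have e2s := congrArg (rename (R := R) ⇑(sw c)) e2
  rw [map_mul, map_sub, hsb] at e2s
  linear_combination (A c * (A c + A d) * A d) * e3 + (A c * (A c + A d)) * e2
    + (A c + A d) * e1 + (A d) * e1s - (A c) * e1t + (A c) * e1ts
    - (A c * A d) * e2s

lemma D_braid (c d : Fin (N + 1)) (hadj : c.succ = d.castSucc)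
    (g : MvPolynomial (Fin (N + 2)) R) :
    D c (D d (D c g)) = D d (D c (D d g)) := by
  have hxy : c.castSucc ≠ c.succ := cs_ne c
  have hyzd : d.castSucc ≠ d.succ := cs_ne d
  have hyz : c.succ ≠ d.succ := hadj ▸ hyzd
  have hxz : c.castSucc ≠ d.succ := by
    have h2 : (c.succ : ℕ) = (d.castSucc : ℕ) := congrArg Fin.val hadj
    intro h
    have h1 : (c.castSucc : ℕ) = (d.succ : ℕ) := congrArg Fin.val h
    simp [Fin.coe_castSucc, Fin.val_succ] at h1 h2
    omega
  -- rename facts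
  have hsb : rename (R := R) ⇑(sw c) (A d) = A (R := R) c + A d := by
    simp only [A, map_sub, rename_X, ← hadj]
    rw [Equiv.swap_apply_right, Equiv.swap_apply_of_ne_of_ne (Ne.symm hxz) (Ne.symm hyz)]
    ring
  have hxy' : c.castSucc ≠ d.castSucc := by rw [← hadj]; exact hxy
  have hta : rename (R := R) ⇑(sw d) (A c) = A (R := R) c + A d := by
    simp only [A, map_sub, rename_X]
    rw [Equiv.swap_apply_of_ne_of_ne hxy' hxz, hadj, Equiv.swap_apply_left, ← hadj]
    ring
  have hsg : rename (R := R) ⇑(sw c) (A (R := R) c + A d) = A (R := R) d := by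
    rw [map_add, ren_A_self, hsb]; ring
  have htg : rename (R := R) ⇑(sw d) (A (R := R) c + A d) = A (R := R) c := by
    rw [map_add, hta, ren_A_self]; ring
  have hcomm : A (R := R) d + A c = A (R := R) c + A d := add_comm _ _
  have hsb2 : rename (R := R) ⇑(sw c) (A d) = A (R := R) d + A c := by
    rw [hsb, hcomm]
  have hta2 : rename (R := R) ⇑(sw d) (A c) = A (R := R) d + A c := by
    rw [hta, hcomm]
  have hsg2 : rename (R := R) ⇑(sw c) (A (R := R) d + A c) = A (R := R) d := by
    rw [hcomm]; exact hsg
  have htg2 : rename (R := R) ⇑(sw d) (A (R := R) d + A c) = A (R := R) c := by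
    rw [hcomm]; exact htg
  -- braid identity on permutations
  have e1 : Equiv.swap c.succ d.succ * Equiv.swap c.castSucc c.succ
      * Equiv.swap c.succ d.succ = Equiv.swap d.succ c.castSucc :=
    Equiv.swap_mul_swap_mul_swap hxy hxz
  have e2 : Equiv.swap c.castSucc c.succ * Equiv.swap c.succ d.succ
      * Equiv.swap c.castSucc c.succ = Equiv.swap c.castSucc d.succ := by
    rw [Equiv.swap_comm c.castSucc c.succ, Equiv.swap_comm c.succ d.succ]
    exact Equiv.swap_mul_swap_mul_swap (Ne.symm hyz) (Ne.symm hxz)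
  have hperm : sw c * sw d * sw c = sw d * sw c * sw d := by
    show Equiv.swap c.castSucc c.succ * Equiv.swap d.castSucc d.succ
        * Equiv.swap c.castSucc c.succ
      = Equiv.swap d.castSucc d.succ * Equiv.swap c.castSucc c.succ
        * Equiv.swap d.castSucc d.succ
    rw [← hadj, e1, e2, Equiv.swap_comm]
  have hb : rename (R := R) ⇑(sw c) (rename ⇑(sw d) (rename ⇑(sw c) g))
      = rename ⇑(sw d) (rename ⇑(sw c) (rename ⇑(sw d) g)) := by
    rw [ren_ren, ren_ren, ren_ren, ren_ren, hperm]
  have hc' := A_cancel c (braid_core D hD c d hsb hsg hta g)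
  have hd' := A_cancel d (braid_core D hD d c hta2 htg2 hsb2 g)
  apply A_cancel c
  apply A_cancel d
  apply X_sub_X_cancel c.castSucc d.succ hxz
  simp only [A] at hc' hd' ⊢
  rw [← hadj] at hc' hd' ⊢
  linear_combination hc' - hd' - hb

end Dem

section Length

variable {N : ℕ}

open Finset

/-- value of adjacent swap -/
lemma sw_val (c : Fin (N + 1)) (t : Fin (N + 2)) :
    ((sw c t : Fin (N + 2)) : ℕ)
      = if (t : ℕ) = (c : ℕ) then (c : ℕ) + 1
        else if (t : ℕ) = (c : ℕ) + 1 then (c : ℕ) else (t : ℕ) := by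
  have hc1 : ((c.castSucc : Fin (N + 2)) : ℕ) = (c : ℕ) := rfl
  have hc2 : ((c.succ : Fin (N + 2)) : ℕ) = (c : ℕ) + 1 := rfl
  rcases eq_or_ne t c.castSucc with rfl | h1
  · rw [Equiv.swap_apply_left, hc2, hc1, if_pos rfl]
  rcases eq_or_ne t c.succ with rfl | h2
  · rw [Equiv.swap_apply_right, hc1, hc2, if_neg (by omega), if_pos rfl]
  · have l1 : (t : ℕ) ≠ (c : ℕ) := fun h => h1 (Fin.ext (by rw [hc1, h]))
    have l2 : (t : ℕ) ≠ (c : ℕ) + 1 := fun h => h2 (Fin.ext (by rw [hc2, h]))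
    rw [Equiv.swap_apply_of_ne_of_ne h1 h2, if_neg l1, if_neg l2]

lemma sw_lt (c : Fin (N + 1)) (u v : Fin (N + 2)) (h : u < v) :
    (sw c v < sw c u ↔ (u = c.castSucc ∧ v = c.succ)) := by
  have h1 := sw_val c u
  have h2 := sw_val c v
  have hc1 : ((c.castSucc : Fin (N + 2)) : ℕ) = (c : ℕ) := rfl
  have hc2 : ((c.succ : Fin (N + 2)) : ℕ) = (c : ℕ) + 1 := rfl
  rw [Fin.lt_iff_val_lt_val] at h ⊢
  rw [Fin.ext_iff, Fin.ext_iff, hc1, hc2]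
  split_ifs at h1 h2 <;> omega

/-- inversion set -/
def invSet (w : Equiv.Perm (Fin (N + 2))) : Finset (Fin (N + 2) × Fin (N + 2)) :=
  univ.filter fun p => p.1 < p.2 ∧ w p.2 < w p.1

/-- length = number of inversions -/
def len (w : Equiv.Perm (Fin (N + 2))) : ℕ := (invSet w).card

lemma len_one : len (1 : Equiv.Perm (Fin (N + 2))) = 0 := by
  have : invSet (1 : Equiv.Perm (Fin (N + 2))) = ∅ := by
    apply Finset.eq_empty_of_forall_notMem
    intro p hp
    simp only [invSet, mem_filter] at hp
    exact absurd hp.2.2 (not_lt.mpr (le_of_lt hp.2.1))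
  rw [len, this, card_empty]

/-- descent -/
def IsDesc (c : Fin (N + 1)) (w : Equiv.Perm (Fin (N + 2))) : Prop :=
  w⁻¹ c.succ < w⁻¹ c.castSucc

lemma len_swap_mul_of_lt (c : Fin (N + 1)) (w : Equiv.Perm (Fin (N + 2)))
    (h : w⁻¹ c.castSucc < w⁻¹ c.succ) : len (sw c * w) = len w + 1 := by
  set p0 : Fin (N + 2) × Fin (N + 2) := (w⁻¹ c.castSucc, w⁻¹ c.succ) with hp0
  have hw1 : w p0.1 = c.castSucc := w.apply_symm_apply _
  have hw2 : w p0.2 = c.succ := w.apply_symm_apply _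
  have hmem : p0 ∉ invSet w := by
    simp only [invSet, mem_filter]
    rintro ⟨-, -, hlt⟩
    rw [hw1, hw2] at hlt
    exact absurd hlt (not_lt.mpr (le_of_lt (Fin.castSucc_lt_succ (i := c))))
  have hins : invSet (sw c * w) = insert p0 (invSet w) := by
    ext q
    simp only [invSet, mem_filter, mem_insert, mem_univ, true_and]
    simp only [Equiv.Perm.mul_apply]
    constructor
    · rintro ⟨hq, hlt⟩
      rcases lt_trichotomy (w q.1) (w q.2) with hw | hw | hw
      · left
        have := (sw_lt c (w q.1) (w q.2) hw).mp hlt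
        have e1 : q.1 = p0.1 := by
          rw [hp0]; rw [← this.1]; exact (w.symm_apply_apply _).symm
        have e2 : q.2 = p0.2 := by
          rw [hp0]; rw [← this.2]; exact (w.symm_apply_apply _).symm
        exact Prod.ext e1 e2
      · exact absurd (w.injective hw) (ne_of_lt hq)
      · exact Or.inr ⟨hq, hw⟩
    · rintro (rfl | ⟨hq, hw⟩)
      · refine ⟨h, ?_⟩
        rw [hw1, hw2, Equiv.swap_apply_left, Equiv.swap_apply_right]
        exact Fin.castSucc_lt_succ (i := c)
      · refine ⟨hq, ?_⟩
        have hne : ¬ (w q.2 = c.castSucc ∧ w q.1 = c.succ) := by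
          rintro ⟨e1, e2⟩
          have q2 : q.2 = p0.1 := by rw [hp0, ← e1]; exact (w.symm_apply_apply _).symm
          have q1 : q.1 = p0.2 := by rw [hp0, ← e2]; exact (w.symm_apply_apply _).symm
          rw [q1, q2] at hq
          exact absurd h (not_lt.mpr (le_of_lt hq))
        have hnot : ¬ sw c (w q.1) < sw c (w q.2) :=
          (sw_lt c (w q.2) (w q.1) hw).not.mpr hne
        have hne2 : sw c (w q.2) ≠ sw c (w q.1) := by
          intro e
          exact absurd (w.injective ((Equiv.injective _) e)) (ne_of_lt hq).symm
        exact lt_of_le_of_ne (not_lt.mp hnot) hne2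
  rw [len, len, hins, card_insert_of_notMem hmem]

lemma len_swap_mul_of_desc (c : Fin (N + 1)) (w : Equiv.Perm (Fin (N + 2)))
    (h : IsDesc c w) : len w = len (sw c * w) + 1 := by
  have key : w = sw c * (sw c * w) := by
    rw [← mul_assoc, sw_invol, one_mul]
  have h2 : (sw c * w)⁻¹ c.castSucc < (sw c * w)⁻¹ c.succ := by
    have e1 : (sw c * w)⁻¹ c.castSucc = w⁻¹ c.succ := by
      rw [mul_inv_rev, Equiv.Perm.mul_apply, Equiv.swap_inv, Equiv.swap_apply_left]
    have e2 : (sw c * w)⁻¹ c.succ = w⁻¹ c.castSucc := by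
      rw [mul_inv_rev, Equiv.Perm.mul_apply, Equiv.swap_inv, Equiv.swap_apply_right]
    rw [e1, e2]
    exact h
  conv_lhs => rw [key]
  exact len_swap_mul_of_lt c (sw c * w) h2

lemma not_desc_iff (c : Fin (N + 1)) (w : Equiv.Perm (Fin (N + 2))) :
    ¬ IsDesc c w ↔ w⁻¹ c.castSucc < w⁻¹ c.succ := by
  unfold IsDesc
  rw [not_lt]
  constructor
  · intro h
    refine lt_of_le_of_ne h fun e => ?_
    exact cs_ne c (w⁻¹.injective e)
  · exact le_of_lt

/-- product of a word -/
def wprod (M : List (Fin (N + 1))) : Equiv.Perm (Fin (N + 2)) :=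
  (M.map fun c => Equiv.swap c.castSucc c.succ).prod

lemma wprod_nil : wprod ([] : List (Fin (N + 1))) = 1 := rfl

lemma wprod_cons (c : Fin (N + 1)) (M : List (Fin (N + 1))) :
    wprod (c :: M) = sw c * wprod M := by
  rw [wprod, List.map_cons, List.prod_cons]
  rfl

lemma len_wprod_le (M : List (Fin (N + 1))) : len (wprod M) ≤ M.length := by
  induction M with
  | nil => rw [wprod_nil, len_one]; exact Nat.zero_le _
  | cons c M ih =>
    rw [wprod_cons, List.length_cons]
    by_cases h : IsDesc c (wprod M)
    · have := len_swap_mul_of_desc c (wprod M) h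
      omega
    · rw [len_swap_mul_of_lt c (wprod M) ((not_desc_iff c (wprod M)).mp h)]
      omega

lemma first_letter (c : Fin (N + 1)) (M1 : List (Fin (N + 1)))
    (h : len (sw c * wprod M1) = M1.length + 1) :
    IsDesc c (sw c * wprod M1) ∧ len (wprod M1) = M1.length := by
  have hle := len_wprod_le M1
  by_cases hd : IsDesc c (wprod M1)
  · have := len_swap_mul_of_desc c (wprod M1) hd
    omega
  · have hlt := (not_desc_iff c (wprod M1)).mp hd
    have heq := len_swap_mul_of_lt c (wprod M1) hlt
    constructor
    · unfold IsDesc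
      have e1 : (sw c * wprod M1)⁻¹ c.castSucc = (wprod M1)⁻¹ c.succ := by
        rw [mul_inv_rev, Equiv.Perm.mul_apply, Equiv.swap_inv, Equiv.swap_apply_left]
      have e2 : (sw c * wprod M1)⁻¹ c.succ = (wprod M1)⁻¹ c.castSucc := by
        rw [mul_inv_rev, Equiv.Perm.mul_apply, Equiv.swap_inv, Equiv.swap_apply_right]
      rw [e1, e2]
      exact hlt
    · omega

lemma exists_descent (w : Equiv.Perm (Fin (N + 2))) (hw : w ≠ 1) :
    ∃ c : Fin (N + 1), IsDesc c w := by
  by_contra hno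
  push_neg at hno
  have hmono : StrictMono ⇑(w⁻¹) := by
    rw [Fin.strictMono_iff_lt_succ]
    intro i
    exact (not_desc_iff i w).mp (by simpa [IsDesc] using hno i)
  have hrange : Set.range ⇑(w⁻¹) = Set.range (id : Fin (N + 2) → Fin (N + 2)) := by
    rw [Set.range_id]
    exact Set.range_eq_univ.mpr (w⁻¹).surjective
  have : ⇑(w⁻¹) = id := by
    have inst : WellFoundedLT (Fin (N + 2)) := inferInstance
    exact (@StrictMono.range_inj (Fin (N + 2)) (Fin (N + 2)) _ _ inst _ id hmono
      strictMono_id).mp hrange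
  apply hw
  have : w⁻¹ = 1 := Equiv.ext fun x => congrFun this x
  rw [← inv_inv w, this, inv_one]

lemma exists_reduced_aux (n : ℕ) :
    ∀ w : Equiv.Perm (Fin (N + 2)), len w = n →
      ∃ M : List (Fin (N + 1)), wprod M = w ∧ M.length = len w := by
  induction n using Nat.strong_induction_on with
  | _ n IH =>
    intro w hn
    rcases eq_or_ne w 1 with rfl | hw
    · exact ⟨[], wprod_nil, by simp [len_one]⟩
    · obtain ⟨c, hc⟩ := exists_descent w hw
      have hlen := len_swap_mul_of_desc c w hc
      obtain ⟨M, hM1, hM2⟩ := IH (len (sw c * w)) (by omega) (sw c * w) rfl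
      refine ⟨c :: M, ?_, ?_⟩
      · rw [wprod_cons, hM1, ← mul_assoc, sw_invol, one_mul]
      · rw [List.length_cons, hM2]
        omega

lemma exists_reduced (w : Equiv.Perm (Fin (N + 2))) :
    ∃ M : List (Fin (N + 1)), wprod M = w ∧ M.length = len w :=
  exists_reduced_aux (len w) w rfl

lemma swinv_apply (c : Fin (N + 1)) (w : Equiv.Perm (Fin (N + 2))) (x : Fin (N + 2)) :
    (sw c * w)⁻¹ x = w⁻¹ (sw c x) := by
  rw [mul_inv_rev, Equiv.Perm.mul_apply, Equiv.swap_inv]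

lemma desc_persist (c d : Fin (N + 1))
    (h1 : d.castSucc ≠ c.castSucc) (h2 : d.castSucc ≠ c.succ)
    (h3 : d.succ ≠ c.castSucc) (h4 : d.succ ≠ c.succ)
    (w : Equiv.Perm (Fin (N + 2))) (hd : IsDesc d w) : IsDesc d (sw c * w) := by
  unfold IsDesc at *
  rw [swinv_apply, swinv_apply, Equiv.swap_apply_of_ne_of_ne h1 h2,
    Equiv.swap_apply_of_ne_of_ne h3 h4]
  exact hd

lemma adj_ne1 (c d : Fin (N + 1)) (hadj : c.succ = d.castSucc) :
    c.castSucc ≠ d.succ := by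
  have h2 : (c : ℕ) + 1 = (d : ℕ) := congrArg Fin.val hadj
  intro e
  have h3 := congrArg Fin.val e
  rw [Fin.coe_castSucc, Fin.val_succ] at h3
  omega

lemma adj_ne2 (c d : Fin (N + 1)) (hadj : c.succ = d.castSucc) :
    c.succ ≠ d.succ := by
  have h2 : (c : ℕ) + 1 = (d : ℕ) := congrArg Fin.val hadj
  intro e
  have h3 := congrArg Fin.val e
  rw [Fin.val_succ, Fin.val_succ] at h3
  omega

lemma adj_ne3 (c d : Fin (N + 1)) (hadj : c.succ = d.castSucc) :
    c.castSucc ≠ d.castSucc := by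
  have h2 : (c : ℕ) + 1 = (d : ℕ) := congrArg Fin.val hadj
  intro e
  have h3 := congrArg Fin.val e
  rw [Fin.coe_castSucc, Fin.coe_castSucc] at h3
  omega

lemma desc_braid1 (c d : Fin (N + 1)) (hadj : c.succ = d.castSucc)
    (w : Equiv.Perm (Fin (N + 2))) (hc : IsDesc c w) (hd : IsDesc d w) :
    IsDesc d (sw c * w) := by
  unfold IsDesc at *
  rw [swinv_apply, swinv_apply, ← hadj, Equiv.swap_apply_right,
    Equiv.swap_apply_of_ne_of_ne (Ne.symm (adj_ne1 c d hadj)) (Ne.symm (adj_ne2 c d hadj))]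
  rw [← hadj] at hd
  exact lt_trans hd hc

lemma desc_braid2 (c d : Fin (N + 1)) (hadj : c.succ = d.castSucc)
    (w : Equiv.Perm (Fin (N + 2))) (hc : IsDesc c w) (hd : IsDesc d w) :
    IsDesc c (sw d * (sw c * w)) := by
  unfold IsDesc at *
  rw [swinv_apply, swinv_apply, swinv_apply, swinv_apply]
  have e1 : sw d c.castSucc = c.castSucc :=
    Equiv.swap_apply_of_ne_of_ne (adj_ne3 c d hadj) (adj_ne1 c d hadj)
  have e2 : sw c c.castSucc = c.succ := Equiv.swap_apply_left _ _
  have e3 : sw d c.succ = d.succ := by rw [hadj]; exact Equiv.swap_apply_left _ _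
  have e4 : sw c d.succ = d.succ :=
    Equiv.swap_apply_of_ne_of_ne (Ne.symm (adj_ne1 c d hadj)) (Ne.symm (adj_ne2 c d hadj))
  rw [e1, e2, e3, e4]
  rw [← hadj] at hd
  exact hd

lemma sw_comm (c d : Fin (N + 1))
    (h1 : c.castSucc ≠ d.castSucc) (h2 : c.castSucc ≠ d.succ)
    (h3 : c.succ ≠ d.castSucc) (h4 : c.succ ≠ d.succ) :
    sw c * sw d = sw d * sw c := by
  apply Equiv.ext
  intro t
  simp only [Equiv.Perm.mul_apply]
  rcases eq_or_ne t c.castSucc with rfl | htc1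
  · rw [Equiv.swap_apply_of_ne_of_ne h1 h2, Equiv.swap_apply_left,
      Equiv.swap_apply_of_ne_of_ne h3 h4]
  rcases eq_or_ne t c.succ with rfl | htc2
  · rw [Equiv.swap_apply_of_ne_of_ne h3 h4, Equiv.swap_apply_right,
      Equiv.swap_apply_of_ne_of_ne h1 h2]
  rcases eq_or_ne t d.castSucc with rfl | htd1
  · rw [Equiv.swap_apply_left, Equiv.swap_apply_of_ne_of_ne htc1 htc2,
      Equiv.swap_apply_of_ne_of_ne (Ne.symm h2) (Ne.symm h4), Equiv.swap_apply_left]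
  rcases eq_or_ne t d.succ with rfl | htd2
  · rw [Equiv.swap_apply_right, Equiv.swap_apply_of_ne_of_ne htc1 htc2,
      Equiv.swap_apply_of_ne_of_ne (Ne.symm h1) (Ne.symm h3), Equiv.swap_apply_right]
  · rw [Equiv.swap_apply_of_ne_of_ne htd1 htd2, Equiv.swap_apply_of_ne_of_ne htc1 htc2]
    exact (Equiv.swap_apply_of_ne_of_ne htd1 htd2).symm

lemma sw_braid (c d : Fin (N + 1)) (hadj : c.succ = d.castSucc) :
    sw c * sw d * sw c = sw d * sw c * sw d := by
  have hxy : c.castSucc ≠ c.succ := cs_ne c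
  have hyz : c.succ ≠ d.succ := adj_ne2 c d hadj
  have hxz : c.castSucc ≠ d.succ := adj_ne1 c d hadj
  have e1 : Equiv.swap c.succ d.succ * Equiv.swap c.castSucc c.succ
      * Equiv.swap c.succ d.succ = Equiv.swap d.succ c.castSucc :=
    Equiv.swap_mul_swap_mul_swap hxy hxz
  have e2 : Equiv.swap c.castSucc c.succ * Equiv.swap c.succ d.succ
      * Equiv.swap c.castSucc c.succ = Equiv.swap c.castSucc d.succ := by
    rw [Equiv.swap_comm c.castSucc c.succ, Equiv.swap_comm c.succ d.succ]
    exact Equiv.swap_mul_swap_mul_swap (Ne.symm hyz) (Ne.symm hxz)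
  show Equiv.swap c.castSucc c.succ * Equiv.swap d.castSucc d.succ
      * Equiv.swap c.castSucc c.succ
    = Equiv.swap d.castSucc d.succ * Equiv.swap c.castSucc c.succ
      * Equiv.swap d.castSucc d.succ
  rw [← hadj, e1, e2, Equiv.swap_comm]

lemma wprod_append (M M' : List (Fin (N + 1))) :
    wprod (M ++ M') = wprod M * wprod M' := by
  rw [wprod, wprod, wprod, List.map_append, List.prod_append]

lemma wprod_reverse (M : List (Fin (N + 1))) : wprod M.reverse = (wprod M)⁻¹ := by
  induction M with
  | nil => simp [wprod_nil]
  | cons c M ih =>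
    rw [List.reverse_cons, wprod_append, ih]
    have h1 : wprod [c] = sw c := by rw [wprod]; simp
    rw [h1, wprod_cons, mul_inv_rev, Equiv.swap_inv]

lemma len_rev :
    2 * len (Fin.revPerm : Equiv.Perm (Fin (N + 2))) + (N + 2) = (N + 2) * (N + 2) := by
  classical
  have h0 : invSet (Fin.revPerm : Equiv.Perm (Fin (N + 2)))
      = univ.filter fun p : Fin (N + 2) × Fin (N + 2) => p.1 < p.2 := by
    ext p
    simp [invSet, Fin.revPerm_apply, Fin.rev_lt_rev]
  set T := univ.filter fun p : Fin (N + 2) × Fin (N + 2) => p.1 < p.2 with hT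
  set U := univ.filter fun p : Fin (N + 2) × Fin (N + 2) => p.2 < p.1 with hU
  have hTU : U = T.image Prod.swap := by
    ext p
    simp only [hT, hU, mem_filter, mem_univ, true_and, mem_image]
    constructor
    · intro h
      exact ⟨p.swap, h, Prod.swap_swap p⟩
    · rintro ⟨q, hq, rfl⟩
      exact hq
  have hcardTU : U.card = T.card := by
    rw [hTU, Finset.card_image_of_injective _ Prod.swap_injective]
  have hsplit : T.card + (univ.filter fun p : Fin (N + 2) × Fin (N + 2) => ¬ p.1 < p.2).card
      = (univ : Finset (Fin (N + 2) × Fin (N + 2))).card :=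
    Finset.card_filter_add_card_filter_not _
  have hneg : (univ.filter fun p : Fin (N + 2) × Fin (N + 2) => ¬ p.1 < p.2)
      = U ∪ (univ.filter fun p : Fin (N + 2) × Fin (N + 2) => p.1 = p.2) := by
    ext p
    simp only [hU, mem_filter, mem_univ, true_and, mem_union, not_lt]
    constructor
    · intro h
      rcases lt_or_eq_of_le h with h' | h'
      · exact Or.inl h'
      · exact Or.inr h'.symm
    · rintro (h | h)
      · exact le_of_lt h
      · exact le_of_eq h.symm
  have hdiag : (univ.filter fun p : Fin (N + 2) × Fin (N + 2) => p.1 = p.2)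
      = (univ : Finset (Fin (N + 2))).image fun u => (u, u) := by
    ext p
    simp only [mem_filter, mem_univ, true_and, mem_image]
    constructor
    · intro h
      refine ⟨p.1, ?_⟩
      rw [Prod.ext_iff]
      exact ⟨rfl, h⟩
    · rintro ⟨u, rfl⟩
      rfl
  have hdiagcard : (univ.filter fun p : Fin (N + 2) × Fin (N + 2) => p.1 = p.2).card = N + 2 := by
    rw [hdiag, Finset.card_image_of_injective _ (fun a b h => (Prod.ext_iff.mp h).1),
      Finset.card_univ, Fintype.card_fin]
  have hdisj : Disjoint U (univ.filter fun p : Fin (N + 2) × Fin (N + 2) => p.1 = p.2) := by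
    rw [Finset.disjoint_left]
    intro p hp hp2
    simp only [hU, mem_filter] at hp hp2
    exact absurd hp2.2 (ne_of_gt hp.2)
  have huniv : (univ : Finset (Fin (N + 2) × Fin (N + 2))).card = (N + 2) * (N + 2) := by
    rw [Finset.card_univ, Fintype.card_prod, Fintype.card_fin]
  have hneg' : (univ.filter fun p : Fin (N + 2) × Fin (N + 2) => ¬ p.1 < p.2).card
      = U.card + (univ.filter fun p : Fin (N + 2) × Fin (N + 2) => p.1 = p.2).card := by
    rw [hneg, Finset.card_union_of_disjoint hdisj]
  rw [len, h0]
  omega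

lemma rev_inv : (Fin.revPerm : Equiv.Perm (Fin (N + 2)))⁻¹ = Fin.revPerm := by
  rw [inv_eq_iff_mul_eq_one]
  apply Equiv.ext
  intro x
  simp [Fin.revPerm_apply, Fin.rev_rev]

lemma rev_desc (c : Fin (N + 1)) : IsDesc c (Fin.revPerm : Equiv.Perm (Fin (N + 2))) := by
  unfold IsDesc
  rw [rev_inv]
  simp only [Fin.revPerm_apply]
  rw [Fin.rev_lt_rev]
  exact Fin.castSucc_lt_succ (i := c)

end Length

section WI

variable {N : ℕ}
  (D : Fin (N + 1) → MvPolynomial (Fin (N + 2)) R →ₗ[R] MvPolynomial (Fin (N + 2)) R)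
  (hD : ∀ (c : Fin (N + 1)) (g : MvPolynomial (Fin (N + 2)) R),
      (X c.castSucc - X c.succ) * D c g
        = g - rename (Equiv.swap c.castSucc c.succ) g)

/-- iterated Demazure along a word -/
noncomputable def DL : List (Fin (N + 1)) → MvPolynomial (Fin (N + 2)) R → MvPolynomial (Fin (N + 2)) R
  | [], g => g
  | c :: M, g => D c (DL M g)

lemma DL_nil (g : MvPolynomial (Fin (N + 2)) R) : DL D [] g = g := rfl

lemma DL_cons (c : Fin (N + 1)) (M : List (Fin (N + 1))) (g : MvPolynomial (Fin (N + 2)) R) :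
    DL D (c :: M) g = D c (DL D M g) := rfl

include hD in
theorem word_indep (k : ℕ) :
    ∀ (M M' : List (Fin (N + 1))), M.length = k → M'.length = k →
      wprod M = wprod M' → len (wprod M) = k →
      ∀ g, DL D M g = DL D M' g := by
  induction k using Nat.strong_induction_on with
  | _ k IH =>
    intro M M' hM hM' hpe hred g
    cases M with
    | nil =>
      cases M' with
      | nil => rfl
      | cons d M2 => rw [← hM'] at hM; simp at hM
    | cons c M1 =>
      cases M' with
      | nil => rw [← hM'] at hM; simp at hM
      | cons d M2 =>
        simp only [List.length_cons] at hM hM'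
        have hw : wprod (c :: M1) = sw c * wprod M1 := wprod_cons c M1
        have hw' : wprod (d :: M2) = sw d * wprod M2 := wprod_cons d M2
        have hlen1 : len (sw c * wprod M1) = M1.length + 1 := by rw [← hw, hred, ← hM]
        obtain ⟨hdesc_c, hred1⟩ := first_letter c M1 hlen1
        have hredd : len (wprod (d :: M2)) = k := by rw [← hpe, hred]
        have hlen2 : len (sw d * wprod M2) = M2.length + 1 := by rw [← hw', hredd, ← hM']
        obtain ⟨hdesc_d, hred2⟩ := first_letter d M2 hlen2
        have hdc : IsDesc c (wprod (c :: M1)) := by rw [hw]; exact hdesc_c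
        have hdd : IsDesc d (wprod (c :: M1)) := by rw [hpe, hw']; exact hdesc_d
        rcases eq_or_ne c d with rfl | hne
        · -- equal first letters
          have hMM : wprod M1 = wprod M2 := by
            have h := hpe
            rw [hw, hw'] at h
            exact mul_left_cancel h
          show D c (DL D M1 g) = D c (DL D M2 g)
          rw [IH M1.length (by omega) M1 M2 rfl (by omega) hMM hred1 g]
        · -- helper for the two adjacent orientations
          have Hadj : ∀ (c d : Fin (N + 1)) (M1 M2 : List (Fin (N + 1))),
              c.succ = d.castSucc → M1.length + 1 = k → M2.length + 1 = k →
              wprod (c :: M1) = wprod (d :: M2) → len (wprod (c :: M1)) = k →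
              DL D (c :: M1) g = DL D (d :: M2) g := by
            clear hw hw' hlen1 hdesc_c hred1 hredd hlen2 hdesc_d hred2 hdc hdd hne hpe hred
              hM hM' M1 M2 c d
            intro c d M1 M2 hadj hM hM' hpe hred
            have hw : wprod (c :: M1) = sw c * wprod M1 := wprod_cons c M1
            have hw' : wprod (d :: M2) = sw d * wprod M2 := wprod_cons d M2
            have hlen1 : len (sw c * wprod M1) = M1.length + 1 := by rw [← hw, hred, ← hM]
            obtain ⟨hdesc_c, hred1⟩ := first_letter c M1 hlen1
            have hredd : len (wprod (d :: M2)) = k := by rw [← hpe, hred]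
            have hlen2 : len (sw d * wprod M2) = M2.length + 1 := by rw [← hw', hredd, ← hM']
            obtain ⟨hdesc_d, hred2⟩ := first_letter d M2 hlen2
            have hdc : IsDesc c (wprod (c :: M1)) := by rw [hw]; exact hdesc_c
            have hdd : IsDesc d (wprod (c :: M1)) := by rw [hpe, hw']; exact hdesc_d
            have hu1 : sw c * wprod (c :: M1) = wprod M1 := by
              rw [hw, ← mul_assoc, sw_invol, one_mul]
            have hd1 : IsDesc d (wprod M1) := by
              rw [← hu1]
              exact desc_braid1 c d hadj _ hdc hdd
            have e2 : len (wprod M1) = len (sw d * wprod M1) + 1 :=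
              len_swap_mul_of_desc d _ hd1
            have hd2 : IsDesc c (sw d * wprod M1) := by
              have h := desc_braid2 c d hadj (wprod (c :: M1)) hdc hdd
              rw [hu1] at h
              exact h
            have e3 : len (sw d * wprod M1) = len (sw c * (sw d * wprod M1)) + 1 :=
              len_swap_mul_of_desc c _ hd2
            obtain ⟨Z, hZ1, hZ2⟩ := exists_reduced (sw c * (sw d * wprod M1))
            have hzw : wprod (d :: c :: Z) = wprod M1 := by
              rw [wprod_cons, wprod_cons, hZ1,
                ← mul_assoc (sw c) (sw c), sw_invol, one_mul, ← mul_assoc, sw_invol, one_mul]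
            have hzl : (d :: c :: Z).length = M1.length := by
              simp only [List.length_cons]
              omega
            have ih1 := IH M1.length (by omega) M1 (d :: c :: Z) rfl hzl hzw.symm hred1 g
            have hbr := sw_braid c d hadj
            have hv : sw d * wprod (c :: M1) = wprod M2 := by
              rw [hpe, hw', ← mul_assoc, sw_invol, one_mul]
            have hzw2 : wprod (c :: d :: Z) = wprod M2 := by
              rw [wprod_cons, wprod_cons, hZ1, ← hv, hw]
              calc sw c * (sw d * (sw c * (sw d * wprod M1)))
                  = (sw c * sw d * sw c) * (sw d * wprod M1) := by simp only [mul_assoc]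
                _ = (sw d * sw c * sw d) * (sw d * wprod M1) := by rw [hbr]
                _ = sw d * (sw c * ((sw d * sw d) * wprod M1)) := by simp only [mul_assoc]
                _ = sw d * (sw c * wprod M1) := by rw [sw_invol, one_mul]
            have hzl2 : (c :: d :: Z).length = M2.length := by
              simp only [List.length_cons]
              omega
            have ih2 := IH M2.length (by omega) M2 (c :: d :: Z) rfl hzl2 hzw2.symm hred2 g
            show D c (DL D M1 g) = D d (DL D M2 g)
            rw [ih1, ih2]
            show D c (D d (D c (DL D Z g))) = D d (D c (D d (DL D Z g)))
            exact D_braid D hD c d hadj (DL D Z g)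
          by_cases hadj1 : (c : ℕ) + 1 = (d : ℕ)
          · exact Hadj c d M1 M2 (Fin.ext hadj1) hM hM' hpe hred
          · by_cases hadj2 : (d : ℕ) + 1 = (c : ℕ)
            · exact (Hadj d c M2 M1 (Fin.ext hadj2) hM' hM hpe.symm hredd).symm
            · -- disjoint case
              have hval : (c : ℕ) ≠ (d : ℕ) := fun e => hne (Fin.ext e)
              have n1 : c.castSucc ≠ d.castSucc := by
                intro e; have h3 := congrArg Fin.val e
                rw [Fin.coe_castSucc, Fin.coe_castSucc] at h3; exact hval h3
              have n2 : c.castSucc ≠ d.succ := by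
                intro e; have h3 := congrArg Fin.val e
                rw [Fin.coe_castSucc, Fin.val_succ] at h3; omega
              have n3 : c.succ ≠ d.castSucc := by
                intro e; have h3 := congrArg Fin.val e
                rw [Fin.val_succ, Fin.coe_castSucc] at h3; omega
              have n4 : c.succ ≠ d.succ := by
                intro e; have h3 := congrArg Fin.val e
                rw [Fin.val_succ, Fin.val_succ] at h3; omega
              have hu1 : sw c * wprod (c :: M1) = wprod M1 := by
                rw [hw, ← mul_assoc, sw_invol, one_mul]
              have hd1 : IsDesc d (wprod M1) := by
                rw [← hu1]
                exact desc_persist c d (Ne.symm n1) (Ne.symm n3) (Ne.symm n2) (Ne.symm n4)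
                  _ hdd
              have e2 : len (wprod M1) = len (sw d * wprod M1) + 1 :=
                len_swap_mul_of_desc d _ hd1
              obtain ⟨Z, hZ1, hZ2⟩ := exists_reduced (sw d * wprod M1)
              have hzw : wprod (d :: Z) = wprod M1 := by
                rw [wprod_cons, hZ1, ← mul_assoc, sw_invol, one_mul]
              have hzl : (d :: Z).length = M1.length := by
                simp only [List.length_cons]
                omega
              have ih1 := IH M1.length (by omega) M1 (d :: Z) rfl hzl hzw.symm hred1 g
              have hcomm := sw_comm c d n1 n2 n3 n4
              have hv : sw d * wprod (c :: M1) = wprod M2 := by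
                rw [hpe, hw', ← mul_assoc, sw_invol, one_mul]
              have hzw2 : wprod (c :: Z) = wprod M2 := by
                rw [wprod_cons, hZ1, ← hv, hw, ← mul_assoc, hcomm, mul_assoc]
              have hzl2 : (c :: Z).length = M2.length := by
                simp only [List.length_cons]
                omega
              have ih2 := IH M2.length (by omega) M2 (c :: Z) rfl hzl2 hzw2.symm hred2 g
              show D c (DL D M1 g) = D d (DL D M2 g)
              rw [ih1, ih2]
              show D c (D d (DL D Z g)) = D d (D c (DL D Z g))
              exact D_comm D hD c d n1 n2 n3 n4 (DL D Z g)

include hD in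
lemma DL_zero (M : List (Fin (N + 1))) : DL D M (0 : MvPolynomial (Fin (N + 2)) R) = 0 := by
  induction M with
  | nil => rfl
  | cons c M ih => rw [DL_cons, ih, map_zero]

lemma DL_append (A B : List (Fin (N + 1))) (p : MvPolynomial (Fin (N + 2)) R) :
    DL D (A ++ B) p = DL D A (DL D B p) := by
  induction A with
  | nil => rfl
  | cons c A ih => rw [List.cons_append, DL_cons, DL_cons, ih]

lemma DL_foldr (M : List (Fin (N + 1))) (p : MvPolynomial (Fin (N + 2)) R) :
    (M.foldr (fun c acc => (D c).comp acc) LinearMap.id) p = DL D M p := by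
  induction M with
  | nil => rfl
  | cons c M ih => rw [List.foldr_cons, LinearMap.comp_apply, ih, DL_cons]

end WI

end DemAux


open DemAux

theorem demazure_longest_word_kills_symmetric
    {R : Type*} [CommRing R] {N : ℕ}
    (D : Fin (N + 1) →
      MvPolynomial (Fin (N + 2)) R →ₗ[R] MvPolynomial (Fin (N + 2)) R)
    (hD : ∀ (c : Fin (N + 1)) (g : MvPolynomial (Fin (N + 2)) R),
      (X c.castSucc - X c.succ) * D c g
        = g - rename (Equiv.swap c.castSucc c.succ) g)
    (L : List (Fin (N + 1)))
    (hlen : L.length = (N + 2) * (N + 1) / 2)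
    (hprod : (L.map fun c => Equiv.swap c.castSucc c.succ).prod
        = (Fin.revPerm : Equiv.Perm (Fin (N + 2))))
    (Dw : MvPolynomial (Fin (N + 2)) R →ₗ[R] MvPolynomial (Fin (N + 2)) R)
    (hDw : Dw = L.foldr (fun c acc => (D c).comp acc) LinearMap.id)
    (i : Fin (N + 1))
    (f : MvPolynomial (Fin (N + 2)) R)
    (hf : rename (Equiv.swap i.castSucc i.succ) f = f) :
    ∀ g : MvPolynomial (Fin (N + 2)) R, Dw (f * Dw g) = 0 := by
  intro g
  have hL : wprod L = (Fin.revPerm : Equiv.Perm (Fin (N + 2))) := hprod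
  have hrev2 : 2 * len (Fin.revPerm : Equiv.Perm (Fin (N + 2))) + (N + 2)
      = (N + 2) * (N + 2) := len_rev
  have hrevlen : len (Fin.revPerm : Equiv.Perm (Fin (N + 2))) = L.length := by
    rw [hlen]
    have h2 : (N + 2) * (N + 2) = (N + 2) * (N + 1) + (N + 2) := by ring
    set m := (N + 2) * (N + 1) with hm
    omega
  have hlenL : len (wprod L) = L.length := by rw [hL]; exact hrevlen
  have hDL : ∀ p, Dw p = DL D L p := by
    intro p
    rw [hDw]
    exact DL_foldr D L p
  -- a reduced word for rev starting with i
  have hdesci : IsDesc i (Fin.revPerm : Equiv.Perm (Fin (N + 2))) := rev_desc i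
  have estep : len (Fin.revPerm : Equiv.Perm (Fin (N + 2)))
      = len (sw i * Fin.revPerm) + 1 := len_swap_mul_of_desc i _ hdesci
  obtain ⟨Y, hY1, hY2⟩ := exists_reduced (sw i * (Fin.revPerm : Equiv.Perm (Fin (N + 2))))
  have hstartw : wprod (i :: Y) = (Fin.revPerm : Equiv.Perm (Fin (N + 2))) := by
    rw [wprod_cons, hY1, ← mul_assoc, sw_invol, one_mul]
  have hstartl : (i :: Y).length = L.length := by
    simp only [List.length_cons]
    omega
  have hendw : wprod (i :: Y).reverse = (Fin.revPerm : Equiv.Perm (Fin (N + 2))) := by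
    rw [wprod_reverse, hstartw, rev_inv]
  have hendl : (i :: Y).reverse.length = L.length := by
    rw [List.length_reverse]
    exact hstartl
  have WI1 := word_indep D hD L.length L (i :: Y) rfl hstartl
    (by rw [hL, hstartw]) hlenL
  have WI2 := word_indep D hD L.length L ((i :: Y).reverse) rfl hendl
    (by rw [hL, hendw]) hlenL
  have hinv : ∀ q, rename ⇑(sw i) (DL D L q) = DL D L q := by
    intro q
    rw [WI1 q]
    exact D_out_inv D hD i (DL D Y q)
  have hkill : ∀ q, rename ⇑(sw i) q = q → DL D L q = 0 := by
    intro q hq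
    rw [WI2 q, List.reverse_cons, DL_append]
    have h0 : DL D [i] q = D i q := rfl
    rw [h0, D_kill D hD i q hq]
    exact DL_zero D hD Y.reverse
  have h1 : rename ⇑(sw i) (f * Dw g) = f * Dw g := by
    rw [map_mul, hDL g]
    rw [hinv g]
    have hf' : rename ⇑(sw i) f = f := hf
    rw [hf']
  rw [hDL (f * Dw g)]
  exact hkill _ h1
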